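/- arXiv:1611.09104 — 3 statements merged into one kernel-verified Lean document; each statement's English description precedes it below -/
import Mathlib

section
/- Any two minimum cuts between s and a non-source node t in a finite directed acyclic graph have a common minimum cut, i.e., there exists a minimum cut between s and t that separates both of them from s. Consequently all minimum cuts in MinCut(t) are pairwise equivalent under ∼. -/
open Finset

/-- Consecutive edges in the list match head-to-tail. -/
def EChain {V E : Type*} (tl hd : E → V) (p : List E) : Prop :=
  p.Chain' (fun d e => hd d = tl e)

/-- A (nonempty) directed path of edges starting at node `s`. -/
def PathFrom {V E : Type*} (tl hd : E → V) (s : V) (p : List E) : Prop :=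
  p ≠ [] ∧ EChain tl hd p ∧ ∀ e ∈ p.head?, tl e = s

/-- The directed graph is acyclic: no nonempty edge-chain returns to its start. -/
def Acyclic {V E : Type*} (tl hd : E → V) : Prop :=
  ∀ p : List E, p ≠ [] → EChain tl hd p →
    ∀ d ∈ p.head?, ∀ e ∈ p.getLast?, hd e ≠ tl d

/-- `B` separates the edge set `A` from `s`: every directed path from `s`
ending with an edge of `A` passes through an edge of `B` (i.e. `B` is a cut
between `s` and `A`). -/
def Separates {V E : Type*} (tl hd : E → V) (s : V) (A B : Finset E) : Prop :=
  ∀ p : List E, PathFrom tl hd s p → (∃ e ∈ p.getLast?, e ∈ A) → ∃ b ∈ B, b ∈ p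

/-- The minimum cut capacity between `s` and the edge set `A`. -/
noncomputable def mincut {V E : Type*} [Fintype E] (tl hd : E → V) (s : V)
    (A : Finset E) : ℕ :=
  sInf {n | ∃ B : Finset E, Separates tl hd s A B ∧ B.card = n}

/-- `B` is a minimum cut between `s` and the edge set `A`. -/
def IsMinCut {V E : Type*} [Fintype E] (tl hd : E → V) (s : V) (A B : Finset E) : Prop :=
  Separates tl hd s A B ∧ B.card = mincut tl hd s A

/-- An edge set is regular if its cardinality equals its minimum cut capacity from `s`. -/
def Regular {V E : Type*} [Fintype E] (tl hd : E → V) (s : V) (A : Finset E) : Prop :=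
  A.card = mincut tl hd s A

/-- `A ∼ A'`: the two edge sets have a common minimum cut from `s`. -/
def EquivSets {V E : Type*} [Fintype E] (tl hd : E → V) (s : V) (A A' : Finset E) : Prop :=
  ∃ C : Finset E, IsMinCut tl hd s A C ∧ IsMinCut tl hd s A' C

/-- `A₁ ≺ A₂`: `|A₁| < |A₂|` and some minimum cut between `s` and `A₂`
also separates `A₁` from `s`. -/
def Dominates {V E : Type*} [Fintype E] (tl hd : E → V) (s : V) (A₁ A₂ : Finset E) : Prop :=
  A₁.card < A₂.card ∧
    ∃ C : Finset E, IsMinCut tl hd s A₂ C ∧ Separates tl hd s A₁ C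

/-- A directed path of edges from node `s` to node `t`. -/
def NPathFromTo {V E : Type*} (tl hd : E → V) (s t : V) (p : List E) : Prop :=
  PathFrom tl hd s p ∧ ∀ e ∈ p.getLast?, hd e = t

/-- `B` is a cut between the nodes `s` and `t`. -/
def NSeparates {V E : Type*} (tl hd : E → V) (s t : V) (B : Finset E) : Prop :=
  ∀ p : List E, NPathFromTo tl hd s t p → ∃ b ∈ B, b ∈ p

/-- The minimum cut capacity between the nodes `s` and `t`. -/
noncomputable def nmincut {V E : Type*} [Fintype E] (tl hd : E → V) (s t : V) : ℕ :=
  sInf {n | ∃ B : Finset E, NSeparates tl hd s t B ∧ B.card = n}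

/-- `B` is a minimum cut between the nodes `s` and `t`. -/
def IsNodeMinCut {V E : Type*} [Fintype E] (tl hd : E → V) (s t : V) (B : Finset E) : Prop :=
  NSeparates tl hd s t B ∧ B.card = nmincut tl hd s t

/-- `d ≤ e` for edges: there is a directed path starting with `d` and ending with `e`
(in particular `d ≤ d`). -/
def EdgeLe {V E : Type*} (tl hd : E → V) (d e : E) : Prop :=
  ∃ p : List E, EChain tl hd p ∧ p.head? = some d ∧ p.getLast? = some e

/-- A family of pairwise edge-disjoint paths. -/
def EdgeDisjoint {E : Type*} {n : ℕ} (P : Fin n → List E) : Prop :=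
  ∀ i j, i ≠ j → List.Disjoint (P i) (P j)

/-- The primary minimum cut between nodes `s` and `t`: a minimum cut separating
every minimum cut between `s` and `t` from `s`. -/
def IsPrimaryNodeMinCut {V E : Type*} [Fintype E] (tl hd : E → V) (s t : V)
    (C : Finset E) : Prop :=
  IsNodeMinCut tl hd s t C ∧
    ∀ C' : Finset E, IsNodeMinCut tl hd s t C' → Separates tl hd s C' C

/-- The primary minimum cut between `s` and an edge set `A`. -/
def IsPrimaryMinCut {V E : Type*} [Fintype E] (tl hd : E → V) (s : V)
    (A C : Finset E) : Prop :=
  IsMinCut tl hd s A C ∧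
    ∀ C' : Finset E, IsMinCut tl hd s A C' → Separates tl hd s C' C

/-- The equivalence class (within the collection `𝒜`) of the wiretap set `A`
under the relation `∼`. -/
def ClassOf {V E : Type*} [Fintype E] (tl hd : E → V) (s : V)
    (𝒜 : Finset (Finset E)) (A : Finset E) : Set (Finset E) :=
  {A' | A' ∈ 𝒜 ∧ EquivSets tl hd s A A'}

/-- Domination amongst (distinct) equivalence classes: some common minimum cut of all
the sets in `C₂` separates every set in `C₁` from `s`. -/
def ClDominates {V E : Type*} [Fintype E] (tl hd : E → V) (s : V)
    (C₁ C₂ : Set (Finset E)) : Prop :=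
  C₁ ≠ C₂ ∧ ∃ CUT : Finset E,
    (∀ A ∈ C₂, IsMinCut tl hd s A CUT) ∧ (∀ A ∈ C₁, Separates tl hd s A CUT)

section Aux
variable {V E : Type*} (tl hd : E → V) (s t : V)

/-- the edge boundary of a vertex set -/
noncomputable def XDelta [Fintype E] (S : Set V) : Finset E :=
  @Finset.filter _ (fun e => tl e ∈ S ∧ hd e ∉ S) (Classical.decPred _) Finset.univ

lemma mem_XDelta [Fintype E] (S : Set V) (e : E) :
    e ∈ XDelta tl hd S ↔ tl e ∈ S ∧ hd e ∉ S := by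
  simp [XDelta]

/-- crossing lemma -/
lemma cross (S : Set V) :
    ∀ (p : List E) (x : E), EChain tl hd (x :: p) → tl x ∈ S →
      ∀ e ∈ (x :: p).getLast?, hd e ∉ S → ∃ c ∈ x :: p, tl c ∈ S ∧ hd c ∉ S := by
  intro p
  induction p with
  | nil =>
    intro x _ hx e he hns
    simp only [List.getLast?_singleton, Option.mem_def, Option.some.injEq] at he
    subst he
    exact ⟨x, by simp, hx, hns⟩
  | cons y ys ih =>
    intro x hch hx e he hns
    rw [EChain, List.Chain', List.isChain_cons_cons] at hch
    by_cases hxS : hd x ∈ S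
    · obtain ⟨c, hc, h⟩ := ih y hch.2 (hch.1 ▸ hxS) e (by
        simpa [List.getLast?_cons_cons] using he) hns
      exact ⟨c, List.mem_cons_of_mem _ hc, h⟩
    · exact ⟨x, by simp, hx, hxS⟩

/-- boundary of a set containing s, not t, is an s-t cut -/
lemma XDelta_nsep [Fintype E] (S : Set V) (hs : s ∈ S) (ht : t ∉ S) :
    NSeparates tl hd s t (XDelta tl hd S) := by
  rintro p ⟨⟨hne, hch, hhead⟩, hlast⟩
  obtain ⟨x, q, rfl⟩ := List.exists_cons_of_ne_nil hne
  have hx : tl x = s := hhead x rfl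
  obtain ⟨e, he⟩ := List.getLast?_isSome.mpr (List.cons_ne_nil x q) |> Option.isSome_iff_exists.mp
  obtain ⟨c, hc, h1, h2⟩ := cross tl hd S q x hch (hx ▸ hs) e he (by rw [hlast e he]; exact ht)
  exact ⟨c, (mem_XDelta tl hd S c).mpr ⟨h1, h2⟩, hc⟩

/-- nmincut is a lower bound on cut cardinalities -/
lemma nmincut_le [Fintype E] (B : Finset E) (hB : NSeparates tl hd s t B) :
    nmincut tl hd s t ≤ B.card :=
  Nat.sInf_le ⟨B, hB, rfl⟩

/-- the reachability set avoiding B -/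
def Reach (B : Finset E) : Set V :=
  {v | v = s ∨ ∃ p : List E, PathFrom tl hd s p ∧ (∀ e ∈ p, e ∉ B) ∧
    ∃ e ∈ p.getLast?, hd e = v}

lemma s_mem_Reach (B : Finset E) : s ∈ Reach tl hd s B := Or.inl rfl

lemma t_not_mem_Reach (B : Finset E) (hts : t ≠ s) (hB : NSeparates tl hd s t B) :
    t ∉ Reach tl hd s B := by
  rintro (rfl | ⟨p, hp, hav, e, he, hhd⟩)
  · exact hts rfl
  · obtain ⟨b, hbB, hbp⟩ := hB p ⟨hp, by
      intro e' he'
      have : e' = e := Option.some_inj.mp ((Option.mem_def.mp he').symm.trans he)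
      subst this; exact hhd⟩
    exact hav b hbp hbB

lemma XDelta_Reach_subset [Fintype E] (B : Finset E) :
    XDelta tl hd (Reach tl hd s B) ⊆ B := by
  intro e he
  rw [mem_XDelta] at he
  obtain ⟨htl, hhd⟩ := he
  by_contra heB
  apply hhd
  rcases htl with rfl | ⟨p, ⟨hne, hch, hhead⟩, hav, d, hd', hdv⟩
  · exact Or.inr ⟨[e], ⟨by simp, List.isChain_singleton e, by simp⟩,
      by simpa using heB, e, rfl, rfl⟩
  · refine Or.inr ⟨p ++ [e], ⟨by simp, ?_, ?_⟩, ?_, e, List.getLast?_concat (l := p), rfl⟩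
    · exact List.IsChain.append hch (List.isChain_singleton e)
        (by intro x hx y hy; simp at hy; subst hy
            rw [Option.mem_def, hd', Option.some_inj] at hx; subst hx; exact hdv)
    · intro x hx
      rw [List.head?_append] at hx
      cases hp : p.head? with
      | none => exact absurd (List.head?_eq_none_iff.mp hp) hne
      | some y =>
        rw [hp] at hx
        have hxy : y = x := by simpa using hx
        exact hxy ▸ hhead y (by rw [hp]; rfl)
    · intro b hb
      rcases List.mem_append.mp hb with h | h
      · exact hav b h
      · simp at h; subst h; exact heB

end Aux

section Aux2
variable {V E : Type*} (tl hd : E → V) (s t : V)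

lemma XDelta_submodular [Fintype E] (S T : Set V) :
    (XDelta tl hd (S ∩ T)).card + (XDelta tl hd (S ∪ T)).card ≤
      (XDelta tl hd S).card + (XDelta tl hd T).card := by
  classical
  simp only [XDelta, Finset.card_filter]
  rw [← Finset.sum_add_distrib, ← Finset.sum_add_distrib]
  apply Finset.sum_le_sum
  intro e _
  by_cases h1 : tl e ∈ S <;> by_cases h2 : tl e ∈ T <;>
    by_cases h3 : hd e ∈ S <;> by_cases h4 : hd e ∈ T <;>
    simp [Set.mem_inter_iff, Set.mem_union, h1, h2, h3, h4]

/-- δ(Reach B) = B for a node min cut B -/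
lemma XDelta_Reach_eq [Fintype E] (hts : t ≠ s) (B : Finset E)
    (hB : IsNodeMinCut tl hd s t B) : XDelta tl hd (Reach tl hd s B) = B := by
  apply Finset.eq_of_subset_of_card_le (XDelta_Reach_subset tl hd s B)
  rw [hB.2]
  exact nmincut_le tl hd s t _ (XDelta_nsep tl hd s t _ (s_mem_Reach tl hd s B)
    (t_not_mem_Reach tl hd s t B hts hB.1))

/-- paths from s into the boundary of S cross δ S' for any smaller S' ∋ s -/
lemma separates_XDelta [Fintype E] (S S' : Set V) (hs : s ∈ S') (hsub : S' ⊆ S) :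
    Separates tl hd s (XDelta tl hd S) (XDelta tl hd S') := by
  rintro p ⟨hne, hch, hhead⟩ ⟨e, he, heA⟩
  obtain ⟨x, q, rfl⟩ := List.exists_cons_of_ne_nil hne
  have hx : tl x = s := hhead x rfl
  have hout : hd e ∉ S' := fun h => ((mem_XDelta tl hd S e).mp heA).2 (hsub h)
  obtain ⟨c, hc, h1, h2⟩ := cross tl hd S' q x hch (hx ▸ hs) e he hout
  exact ⟨c, (mem_XDelta tl hd S' c).mpr ⟨h1, h2⟩, hc⟩

/-- a separator of a node cut is itself a node cut -/
lemma sep_of_cut_is_cut (A B : Finset E) (hA : NSeparates tl hd s t A)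
    (hAB : Separates tl hd s A B) : NSeparates tl hd s t B := by
  rintro p hp
  obtain ⟨a, haA, hap⟩ := hA p hp
  obtain ⟨u, v, rfl⟩ := List.append_of_mem hap
  obtain ⟨⟨hne, hch, hhead⟩, -⟩ := hp
  have hpref : (u ++ [a]) <+: (u ++ a :: v) := ⟨v, by simp⟩
  have hch' : EChain tl hd (u ++ [a]) := List.IsChain.prefix hch hpref
  have hhead' : ∀ e ∈ (u ++ [a]).head?, tl e = s := by
    intro e he
    apply hhead
    rcases u with _ | ⟨y, u'⟩ <;> simpa using he
  obtain ⟨b, hbB, hbq⟩ := hAB (u ++ [a]) ⟨by simp, hch', hhead'⟩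
    ⟨a, List.getLast?_concat (l := u), haA⟩
  refine ⟨b, hbB, ?_⟩
  rcases List.mem_append.mp hbq with h | h
  · exact List.mem_append.mpr (Or.inl h)
  · simp at h; subst h; exact List.mem_append.mpr (Or.inr (by simp))

end Aux2

theorem nodeMinCuts_equiv' {V E : Type*} [Fintype E] (tl hd : E → V) (s t : V)
    (hts : t ≠ s)
    (CUT₁ CUT₂ : Finset E)
    (h₁ : IsNodeMinCut tl hd s t CUT₁) (h₂ : IsNodeMinCut tl hd s t CUT₂) :
    EquivSets tl hd s CUT₁ CUT₂ := by
  set S₁ := Reach tl hd s CUT₁ with hS₁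
  set S₂ := Reach tl hd s CUT₂ with hS₂
  have hE1 : XDelta tl hd S₁ = CUT₁ := XDelta_Reach_eq tl hd s t hts CUT₁ h₁
  have hE2 : XDelta tl hd S₂ = CUT₂ := XDelta_Reach_eq tl hd s t hts CUT₂ h₂
  have hs1 : s ∈ S₁ := s_mem_Reach tl hd s CUT₁
  have hs2 : s ∈ S₂ := s_mem_Reach tl hd s CUT₂
  have ht1 : t ∉ S₁ := t_not_mem_Reach tl hd s t CUT₁ hts h₁.1
  have ht2 : t ∉ S₂ := t_not_mem_Reach tl hd s t CUT₂ hts h₂.1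
  set C := XDelta tl hd (S₁ ∩ S₂) with hC
  have hCcut : NSeparates tl hd s t C :=
    XDelta_nsep tl hd s t _ ⟨hs1, hs2⟩ (fun h => ht1 h.1)
  have hUcut : NSeparates tl hd s t (XDelta tl hd (S₁ ∪ S₂)) :=
    XDelta_nsep tl hd s t _ (Or.inl hs1) (fun h => h.elim ht1 ht2)
  have hsub := XDelta_submodular tl hd S₁ S₂
  rw [← hC, hE1, hE2, h₁.2, h₂.2] at hsub
  have hCge : nmincut tl hd s t ≤ C.card := nmincut_le tl hd s t C hCcut
  have hUge : nmincut tl hd s t ≤ (XDelta tl hd (S₁ ∪ S₂)).card :=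
    nmincut_le tl hd s t _ hUcut
  have hCcard : C.card = nmincut tl hd s t := by omega
  have hsep1 : Separates tl hd s CUT₁ C := by
    rw [← hE1]; exact separates_XDelta tl hd s S₁ _ ⟨hs1, hs2⟩ Set.inter_subset_left
  have hsep2 : Separates tl hd s CUT₂ C := by
    rw [← hE2]; exact separates_XDelta tl hd s S₂ _ ⟨hs1, hs2⟩ Set.inter_subset_right
  have hmc : ∀ CUT : Finset E, IsNodeMinCut tl hd s t CUT → Separates tl hd s CUT C →
      mincut tl hd s CUT = nmincut tl hd s t := by
    intro CUT hCUT hsep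
    apply le_antisymm
    · exact hCcard ▸ Nat.sInf_le ⟨C, hsep, rfl⟩
    · refine le_csInf ⟨C.card, C, hsep, rfl⟩ ?_
      rintro n ⟨B, hBsep, rfl⟩
      exact nmincut_le tl hd s t B (sep_of_cut_is_cut tl hd s t CUT B hCUT.1 hBsep)
  exact ⟨C, ⟨hsep1, hCcard.trans (hmc CUT₁ h₁ hsep1).symm⟩,
    ⟨hsep2, hCcard.trans (hmc CUT₂ h₂ hsep2).symm⟩⟩

/-- any two minimum cuts between `s` and a non-source node `t`
have a common minimum cut from `s`; i.e. they are equivalent under `∼`. -/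
theorem nodeMinCuts_equiv {V E : Type*} [Fintype E] (tl hd : E → V) (s t : V)
    (hacy : Acyclic tl hd) (hsrc : ∀ e : E, hd e ≠ s) (hts : t ≠ s)
    (CUT₁ CUT₂ : Finset E)
    (h₁ : IsNodeMinCut tl hd s t CUT₁) (h₂ : IsNodeMinCut tl hd s t CUT₂) :
    EquivSets tl hd s CUT₁ CUT₂ :=
  nodeMinCuts_equiv' tl hd s t hts CUT₁ CUT₂ h₁ h₂
end

section
/- Let A be a regular edge set in a finite directed acyclic graph G with source s, and let CUT be the primary minimum cut between s and A. Then: (1) for any regular edge set A' with A' ∼ A, CUT is also the primary minimum cut between s and A'; (2) for any regular edge set B with B ≺ A, CUT separates B from s. -/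
open Finset

section AuxPrimary

variable {V E : Type*}

theorem sep_trans' (tl hd : E → V) (s : V) {A C B : Finset E}
    (h1 : Separates tl hd s A C) (h2 : Separates tl hd s C B) :
    Separates tl hd s A B := by
  intro p hp hlast
  obtain ⟨c, hcC, hcp⟩ := h1 p hp hlast
  obtain ⟨l1, l2, rfl⟩ := List.append_of_mem hcp
  have hq : PathFrom tl hd s (l1 ++ [c]) := by
    refine ⟨by simp, ?_, ?_⟩
    · exact hp.2.1.prefix ⟨l2, by simp⟩
    · intro e he
      apply hp.2.2
      rcases l1 with _ | ⟨a, l⟩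
      · simpa using he
      · simpa using he
  obtain ⟨b, hbB, hbq⟩ := h2 (l1 ++ [c]) hq ⟨c, by simp [List.getLast?_concat], hcC⟩
  refine ⟨b, hbB, ?_⟩
  rcases List.mem_append.1 hbq with h | h
  · exact List.mem_append.2 (Or.inl h)
  · simp only [List.mem_singleton] at h
    subst h
    exact List.mem_append.2 (Or.inr List.mem_cons_self)

open Classical in
noncomputable def vcut [Fintype E] (tl hd : E → V) (T : Finset E) (U : Set V) : Finset E :=
  Finset.univ.filter (fun e => tl e ∈ U ∧ (hd e ∉ U ∨ e ∈ T))

def USet (tl hd : E → V) (s : V) (X : Finset E) : Set V :=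
  {v | v = s ∨ ∃ p : List E, PathFrom tl hd s p ∧ (∀ e ∈ p, e ∉ X) ∧ ∃ e ∈ p.getLast?, hd e = v}

theorem s_mem_USet (tl hd : E → V) (s : V) (X : Finset E) : s ∈ USet tl hd s X :=
  Or.inl rfl

theorem mem_vcut [Fintype E] (tl hd : E → V) (T : Finset E) (U : Set V) (e : E) :
    e ∈ vcut tl hd T U ↔ tl e ∈ U ∧ (hd e ∉ U ∨ e ∈ T) := by
  classical
  simp [vcut]

theorem stay [Fintype E] (tl hd : E → V) (T : Finset E) (U : Set V) :
    ∀ p : List E, EChain tl hd p → (∀ e ∈ p.head?, tl e ∈ U) →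
      (∀ e ∈ p, e ∉ vcut tl hd T U) → ∀ e ∈ p, tl e ∈ U ∧ hd e ∈ U ∧ e ∉ T := by
  intro p
  induction p with
  | nil => intro _ _ _ e he; simp at he
  | cons a q ih =>
    intro hch hhd havoid e he
    have hch' := List.isChain_cons.1 hch
    have hta : tl a ∈ U := hhd a rfl
    have hna := havoid a List.mem_cons_self
    rw [mem_vcut] at hna
    push_neg at hna
    obtain ⟨hha, hnT⟩ := hna hta
    have hrest : ∀ e ∈ q, tl e ∈ U ∧ hd e ∈ U ∧ e ∉ T := by
      apply ih hch'.2
      · intro d hd'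
        have := hch'.1 d hd'
        rw [← this]; exact hha
      · intro d hd'; exact havoid d (List.mem_cons_of_mem _ hd')
    rcases List.mem_cons.1 he with rfl | he
    · exact ⟨hta, hha, hnT⟩
    · exact hrest e he

theorem sep_vcut [Fintype E] (tl hd : E → V) (s : V) (T : Finset E) {U : Set V} (hs : s ∈ U) :
    Separates tl hd s T (vcut tl hd T U) := by
  rintro p hp ⟨e, he, heT⟩
  by_contra hcon
  push_neg at hcon
  have hstay := stay tl hd T U p hp.2.1 (fun d hd' => by rw [hp.2.2 d hd']; exact hs)
    (fun d hdp hdv => hcon d hdv hdp)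
  exact (hstay e (List.mem_of_mem_getLast? he)).2.2 heT

theorem vcut_mono [Fintype E] (tl hd : E → V) (s : V) (T : Finset E) {U W : Set V}
    (hs : s ∈ U) (hUW : U ⊆ W) :
    Separates tl hd s (vcut tl hd T W) (vcut tl hd T U) := by
  rintro p hp ⟨e, he, heW⟩
  by_contra hcon
  push_neg at hcon
  have hstay := stay tl hd T U p hp.2.1 (fun d hd' => by rw [hp.2.2 d hd']; exact hs)
    (fun d hdp hdv => hcon d hdv hdp)
  have h2 := hstay e (List.mem_of_mem_getLast? he)
  rw [mem_vcut] at heW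
  rcases heW.2 with h | h
  · exact h (hUW h2.2.1)
  · exact h2.2.2 h

theorem path_snoc (tl hd : E → V) (s : V) {q : List E} {e : E}
    (hq : PathFrom tl hd s q) (hlink : ∀ d ∈ q.getLast?, hd d = tl e) :
    PathFrom tl hd s (q ++ [e]) := by
  refine ⟨by simp, ?_, ?_⟩
  · exact List.isChain_append.2 ⟨hq.2.1, List.isChain_singleton e,
      fun x hx y hy => by simp only [List.head?_cons, Option.mem_some_iff] at hy; subst hy; exact hlink x hx⟩
  · intro d hd'
    rw [List.head?_append_of_ne_nil _ hq.1] at hd'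
    exact hq.2.2 d hd'

theorem vcut_subset [Fintype E] (tl hd : E → V) (s : V) {T X : Finset E}
    (hX : Separates tl hd s T X) :
    vcut tl hd T (USet tl hd s X) ⊆ X := by
  intro e he
  rw [mem_vcut] at he
  by_contra heX
  obtain ⟨p, hp, havoid, hlast⟩ : ∃ p, PathFrom tl hd s p ∧ (∀ d ∈ p, d ∉ X) ∧ p.getLast? = some e := by
    rcases he.1 with htl | ⟨q, hq, hqa, d, hd', hde⟩
    · refine ⟨[e], ⟨by simp, List.isChain_singleton e, ?_⟩, ?_, by simp⟩
      · intro d hd'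
        simp only [List.head?_cons, Option.mem_some_iff] at hd'
        subst hd'; exact htl
      · intro d hd'
        simp only [List.mem_singleton] at hd'
        subst hd'; exact heX
    · refine ⟨q ++ [e], path_snoc tl hd s hq ?_, ?_, List.getLast?_concat⟩
      · intro d' hd''
        have : d' = d := by
          rw [Option.mem_def] at hd' hd''
          rw [hd''] at hd'; exact Option.some_inj.1 hd'
        subst this; exact hde
      · intro x hx
        rcases List.mem_append.1 hx with h | h
        · exact hqa x h
        · simp only [List.mem_singleton] at h; subst h; exact heX
  have hhd : hd e ∈ USet tl hd s X := Or.inr ⟨p, hp, havoid, e, by rw [Option.mem_def]; exact hlast, rfl⟩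
  rcases he.2 with h | h
  · exact h hhd
  · obtain ⟨b, hbX, hbp⟩ := hX p hp ⟨e, by rw [Option.mem_def]; exact hlast, h⟩
    exact havoid b hbp hbX

theorem USet_vcut_subset [Fintype E] (tl hd : E → V) (s : V) (T : Finset E) {S : Set V}
    (hs : s ∈ S) : USet tl hd s (vcut tl hd T S) ⊆ S := by
  rintro v (rfl | ⟨p, hp, havoid, e, he, rfl⟩)
  · exact hs
  · exact (stay tl hd T S p hp.2.1 (fun d hd' => by rw [hp.2.2 d hd']; exact hs) havoid e
      (List.mem_of_mem_getLast? he)).2.1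

theorem vcut_submod [Fintype E] (tl hd : E → V) (T : Finset E) (U W : Set V) :
    (vcut tl hd T (U ∩ W)).card + (vcut tl hd T (U ∪ W)).card ≤
      (vcut tl hd T U).card + (vcut tl hd T W).card := by
  classical
  have key : ∀ (S : Set V), (vcut tl hd T S).card
      = ∑ e : E, if tl e ∈ S ∧ (hd e ∉ S ∨ e ∈ T) then 1 else 0 := by
    intro S
    rw [vcut, Finset.card_filter]
  rw [key, key, key, key, ← Finset.sum_add_distrib, ← Finset.sum_add_distrib]
  apply Finset.sum_le_sum
  intro e _
  by_cases h1 : tl e ∈ U <;> by_cases h2 : tl e ∈ W <;> by_cases h3 : hd e ∈ U <;>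
    by_cases h4 : hd e ∈ W <;> by_cases h5 : e ∈ T <;>
    simp [Set.mem_inter_iff, Set.mem_union, h1, h2, h3, h4, h5]

theorem sep_univ' [Fintype E] (tl hd : E → V) (s : V) (T : Finset E) :
    Separates tl hd s T (Finset.univ : Finset E) := by
  rintro p hp ⟨e, he, _⟩
  exact ⟨e, Finset.mem_univ e, List.mem_of_mem_getLast? he⟩

theorem exists_isMinCut [Fintype E] (tl hd : E → V) (s : V) (T : Finset E) :
    ∃ X, IsMinCut tl hd s T X := by
  have hne : {n | ∃ B : Finset E, Separates tl hd s T B ∧ B.card = n}.Nonempty :=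
    ⟨_, Finset.univ, sep_univ' tl hd s T, rfl⟩
  obtain ⟨B, hB, hBcard⟩ := Nat.sInf_mem hne
  exact ⟨B, hB, hBcard⟩

theorem mincut_le' [Fintype E] (tl hd : E → V) (s : V) {T X : Finset E}
    (h : Separates tl hd s T X) : mincut tl hd s T ≤ X.card :=
  Nat.sInf_le ⟨X, h, rfl⟩

theorem minCut_eq_vcut [Fintype E] (tl hd : E → V) (s : V) {T X : Finset E}
    (hX : IsMinCut tl hd s T X) : vcut tl hd T (USet tl hd s X) = X := by
  apply Finset.eq_of_subset_of_card_le (vcut_subset tl hd s hX.1)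
  rw [hX.2]
  exact mincut_le' tl hd s (sep_vcut tl hd s T (s_mem_USet tl hd s X))

theorem exists_bottom [Fintype E] (tl hd : E → V) (s : V) (T : Finset E) :
    ∃ P : Finset E, IsMinCut tl hd s T P ∧
      ∀ X, IsMinCut tl hd s T X → Separates tl hd s X P := by
  classical
  have main : ∀ F : Finset (Finset E),
      ∃ S : Set V, s ∈ S ∧ IsMinCut tl hd s T (vcut tl hd T S) ∧
        ∀ X ∈ F, IsMinCut tl hd s T X → S ⊆ USet tl hd s X := by
    intro F
    induction F using Finset.induction_on with
    | empty =>
      obtain ⟨X, hX⟩ := exists_isMinCut tl hd s T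
      refine ⟨USet tl hd s X, s_mem_USet tl hd s X, ?_, by simp⟩
      rw [minCut_eq_vcut tl hd s hX]; exact hX
    | @insert X F' hnotmem ih =>
      obtain ⟨S, hsS, hmin, hF⟩ := ih
      by_cases hX : IsMinCut tl hd s T X
      · have hsS' : s ∈ S ∩ USet tl hd s X := ⟨hsS, s_mem_USet tl hd s X⟩
        have h1 : mincut tl hd s T ≤ (vcut tl hd T (S ∩ USet tl hd s X)).card :=
          mincut_le' tl hd s (sep_vcut tl hd s T hsS')
        have h2 : mincut tl hd s T ≤ (vcut tl hd T (S ∪ USet tl hd s X)).card :=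
          mincut_le' tl hd s (sep_vcut tl hd s T (Or.inl hsS))
        have h3 := vcut_submod tl hd T S (USet tl hd s X)
        rw [minCut_eq_vcut tl hd s hX] at h3
        have h4 : (vcut tl hd T S).card = mincut tl hd s T := hmin.2
        have h5 : X.card = mincut tl hd s T := hX.2
        have hmincard : (vcut tl hd T (S ∩ USet tl hd s X)).card = mincut tl hd s T := by omega
        have hmin' : IsMinCut tl hd s T (vcut tl hd T (S ∩ USet tl hd s X)) :=
          ⟨sep_vcut tl hd s T hsS', hmincard⟩
        refine ⟨USet tl hd s (vcut tl hd T (S ∩ USet tl hd s X)), s_mem_USet tl hd s _, ?_, ?_⟩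
        · rw [minCut_eq_vcut tl hd s hmin']; exact hmin'
        · intro Y hY hYmin
          have hsub : USet tl hd s (vcut tl hd T (S ∩ USet tl hd s X)) ⊆ S ∩ USet tl hd s X :=
            USet_vcut_subset tl hd s T hsS'
          rcases Finset.mem_insert.1 hY with rfl | hY
          · exact hsub.trans Set.inter_subset_right
          · exact hsub.trans (Set.inter_subset_left.trans (hF Y hY hYmin))
      · refine ⟨S, hsS, hmin, fun Y hY hYmin => ?_⟩
        rcases Finset.mem_insert.1 hY with rfl | hY
        · exact absurd hYmin hX
        · exact hF Y hY hYmin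
  obtain ⟨S, hsS, hmin, hall⟩ := main Finset.univ
  refine ⟨vcut tl hd T S, hmin, fun X hX => ?_⟩
  have hsub : S ⊆ USet tl hd s X := hall X (Finset.mem_univ X) hX
  have hmono := vcut_mono tl hd s T hsS hsub
  rwa [minCut_eq_vcut tl hd s hX] at hmono

end AuxPrimary

/-- if `CUT` is the primary minimum cut between `s` and a regular
edge set `A`, then (1) it is also the primary minimum cut of any regular `A' ∼ A`,
and (2) it separates from `s` any regular `B` with `B ≺ A`. -/
theorem primaryMinCut_props {V E : Type*} [Fintype E] (tl hd : E → V) (s : V)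
    (hacy : Acyclic tl hd) (hsrc : ∀ e : E, hd e ≠ s)
    (A CUT : Finset E) (hA : Regular tl hd s A)
    (hCUT : IsPrimaryMinCut tl hd s A CUT) :
    (∀ A' : Finset E, Regular tl hd s A' → EquivSets tl hd s A' A →
      IsPrimaryMinCut tl hd s A' CUT) ∧
    (∀ B : Finset E, Regular tl hd s B → Dominates tl hd s B A →
      Separates tl hd s B CUT) := by
  obtain ⟨⟨hCUTsep, hCUTcard⟩, hCUTprim⟩ := hCUT
  constructor
  · rintro A' hA' ⟨C, hCA', hCA⟩
    have hmceq : mincut tl hd s A' = mincut tl hd s A := by rw [← hCA'.2, hCA.2]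
    have hsepC : Separates tl hd s C CUT := hCUTprim C hCA
    have hCUTA' : IsMinCut tl hd s A' CUT :=
      ⟨sep_trans' tl hd s hCA'.1 hsepC, by rw [hCUTcard, hmceq]⟩
    refine ⟨hCUTA', fun C' hC' => ?_⟩
    obtain ⟨P, hPmin, hPbot⟩ := exists_bottom tl hd s A'
    have hPA : IsMinCut tl hd s A P :=
      ⟨sep_trans' tl hd s hCA.1 (hPbot C hCA'), by rw [hPmin.2, hmceq]⟩
    exact sep_trans' tl hd s (hPbot C' hC') (hCUTprim P hPA)
  · rintro B hB ⟨hcard, Cb, hCbmin, hCbsep⟩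
    exact sep_trans' tl hd s hCbsep (hCUTprim Cb hCbmin)
end

section
/- In a unit-capacity network G with a maximum flow f from source s to sink t, the edge set CUT = {e : tail(e) is f-reachable from s and head(e) is not f-reachable from s}, where a node is f-reachable if there is an f-unsaturated path to it from s (forward edges with flow 0 or reverse edges with flow 1), is the primary minimum cut between s and t. -/
open Finset

/-- A unit-capacity flow from `s` to `t`: values in `{0,1}` and conservation at
every intermediate node. -/
def IsFlow {V E : Type*} [Fintype E] [DecidableEq V] (tl hd : E → V) (s t : V)
    (f : E → ℕ) : Prop :=
  (∀ e, f e ≤ 1) ∧ ∀ v : V, v ≠ s → v ≠ t →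
    (∑ e : E, if hd e = v then f e else 0) = ∑ e : E, if tl e = v then f e else 0

/-- The value of a flow: net outflow at the source. -/
noncomputable def flowValue {V E : Type*} [Fintype E] [DecidableEq V]
    (tl hd : E → V) (s : V) (f : E → ℕ) : ℕ :=
  (∑ e : E, if tl e = s then f e else 0) - ∑ e : E, if hd e = s then f e else 0

/-- `f`-reachability from `s` along `f`-unsaturated paths: forward edges with
flow `0` or reverse edges with flow `1`. -/
inductive FReach {V E : Type*} (tl hd : E → V) (f : E → ℕ) (s : V) : V → Prop
  | refl : FReach tl hd f s s
  | forward (e : E) : FReach tl hd f s (tl e) → f e = 0 → FReach tl hd f s (hd e)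
  | backward (e : E) : FReach tl hd f s (hd e) → f e = 1 → FReach tl hd f s (tl e)

section Aux

variable {V E : Type*} [Fintype E] [DecidableEq V] (tl hd : E → V) (s t : V)

/-- Vertices reachable from `s` by a directed path avoiding the edge set `B`. -/
def RAvoid (B : Finset E) (v : V) : Prop :=
  v = s ∨ ∃ p : List E, PathFrom tl hd s p ∧ (∀ e ∈ p.getLast?, hd e = v) ∧ ∀ b ∈ p, b ∉ B

lemma RAvoid.extend {B : Finset E} {e : E} (h : RAvoid tl hd s B (tl e)) (he : e ∉ B) :
    RAvoid tl hd s B (hd e) := by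
  rcases h with h | ⟨p, ⟨hne, hch, hhead⟩, hlast, havoid⟩
  · refine Or.inr ⟨[e], ⟨by simp, List.isChain_singleton e, ?_⟩, ?_, ?_⟩
    · intro d hd'; simp at hd'; subst hd'; exact h
    · intro d hd'; simp at hd'; subst hd'; rfl
    · intro b hb; simp at hb; subst hb; exact he
  · refine Or.inr ⟨p ++ [e], ⟨by simp, ?_, ?_⟩, ?_, ?_⟩
    · exact List.IsChain.append hch (List.isChain_singleton e)
        (fun x hx y hy => by simp at hy; subst hy; exact hlast x hx)
    · have hh : (p ++ [e]).head? = p.head? := by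
        cases p with
        | nil => exact absurd rfl hne
        | cons a q => rfl
      rw [hh]; exact hhead
    · intro d hd'; rw [List.getLast?_concat] at hd'; simp at hd'; subst hd'; rfl
    · intro b hb; rcases List.mem_append.mp hb with hb | hb
      · exact havoid b hb
      · simp at hb; subst hb; exact he

/-- Every edge's head along a chain satisfies `P` if `P` propagates along edges. -/
lemma chain_heads (P : V → Prop) :
    ∀ p : List E, EChain tl hd p → (∀ e ∈ p, P (tl e) → P (hd e)) →
      ∀ v, (∀ e ∈ p.head?, tl e = v) → P v → ∀ e ∈ p, P (hd e) := by
  intro p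
  induction p with
  | nil => intro _ _ _ _ _ e he; simp at he
  | cons a q ih =>
    intro hch hstep v hhead hv e he
    have hta : tl a = v := hhead a rfl
    have hPa : P (hd a) := hstep a (by simp) (hta ▸ hv)
    rcases List.mem_cons.mp he with rfl | he'
    · exact hPa
    · have hch' := List.isChain_cons.mp hch
      exact ih hch'.2 (fun d hd' h => hstep d (List.mem_cons_of_mem a hd') h)
        (hd a) (fun d hd' => (hch'.1 d hd').symm) hPa e he'

/-- Flow across a vertex set containing `s` but not `t` equals the flow value
plus the flow entering the set. -/
lemma cut_count (hsrc : ∀ e : E, hd e ≠ s) (f : E → ℕ) (hf : IsFlow tl hd s t f)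
    (S0 : V → Prop) [DecidablePred S0] (hs : S0 s) (ht : ¬ S0 t) :
    (∑ e : E, if S0 (tl e) ∧ ¬ S0 (hd e) then f e else 0)
      = flowValue tl hd s f + ∑ e : E, if S0 (hd e) ∧ ¬ S0 (tl e) then f e else 0 := by
  classical
  set W : Finset V := ((Finset.univ.image tl ∪ Finset.univ.image hd) ∪ {s}) with hW
  have htlW : ∀ e : E, tl e ∈ W := fun e => by
    simp [hW, Finset.mem_union, Finset.mem_image]
  have hhdW : ∀ e : E, hd e ∈ W := fun e => by
    simp [hW, Finset.mem_union, Finset.mem_image]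
  have hsW : s ∈ W := by simp [hW]
  set F : Finset V := W.filter S0 with hF
  have keyA : (∑ e : E, if S0 (tl e) then f e else 0)
      = ∑ v ∈ F, ∑ e : E, if tl e = v then f e else 0 := by
    rw [Finset.sum_comm]
    refine Finset.sum_congr rfl (fun e _ => ?_)
    rw [Finset.sum_ite_eq F (tl e) (fun _ => f e)]
    simp only [hF, Finset.mem_filter]
    by_cases h : S0 (tl e) <;> simp [h, htlW e]
  have keyB : (∑ e : E, if S0 (hd e) then f e else 0)
      = ∑ v ∈ F, ∑ e : E, if hd e = v then f e else 0 := by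
    rw [Finset.sum_comm]
    refine Finset.sum_congr rfl (fun e _ => ?_)
    rw [Finset.sum_ite_eq F (hd e) (fun _ => f e)]
    simp only [hF, Finset.mem_filter]
    by_cases h : S0 (hd e) <;> simp [h, hhdW e]
  have hins : (∑ e : E, if hd e = s then f e else 0) = 0 :=
    Finset.sum_eq_zero (fun e _ => by simp [hsrc e])
  have hfv : flowValue tl hd s f = ∑ e : E, if tl e = s then f e else 0 := by
    unfold flowValue; rw [hins, Nat.sub_zero]
  have hsF : s ∈ F := by simp [hF, hsW, hs]
  have hmain : (∑ e : E, if S0 (tl e) then f e else 0)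
      = flowValue tl hd s f + ∑ e : E, if S0 (hd e) then f e else 0 := by
    rw [keyA, keyB, ← Finset.add_sum_erase F _ hsF, ← Finset.add_sum_erase F _ hsF,
      hins, ← hfv, zero_add]
    congr 1
    refine Finset.sum_congr rfl (fun v hv => ?_)
    have hvs : v ≠ s := (Finset.mem_erase.mp hv).1
    have hvS0 : S0 v := (Finset.mem_filter.mp (Finset.mem_erase.mp hv).2).2
    have hvt : v ≠ t := fun h => ht (h ▸ hvS0)
    exact (hf.2 v hvs hvt).symm
  have splitA : (∑ e : E, if S0 (tl e) then f e else 0)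
      = (∑ e : E, if S0 (tl e) ∧ ¬ S0 (hd e) then f e else 0)
        + ∑ e : E, if S0 (tl e) ∧ S0 (hd e) then f e else 0 := by
    rw [← Finset.sum_add_distrib]
    refine Finset.sum_congr rfl (fun e _ => ?_)
    by_cases h1 : S0 (tl e) <;> by_cases h2 : S0 (hd e) <;> simp [h1, h2]
  have splitB : (∑ e : E, if S0 (hd e) then f e else 0)
      = (∑ e : E, if S0 (hd e) ∧ ¬ S0 (tl e) then f e else 0)
        + ∑ e : E, if S0 (tl e) ∧ S0 (hd e) then f e else 0 := by
    rw [← Finset.sum_add_distrib]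
    refine Finset.sum_congr rfl (fun e _ => ?_)
    by_cases h1 : S0 (tl e) <;> by_cases h2 : S0 (hd e) <;> simp [h1, h2]
  rw [splitA, splitB] at hmain
  omega

/-- Core lemma: for any separating edge set `B` of cardinality equal to the
flow value, every residually reachable vertex is reachable avoiding `B`. -/
lemma core_lemma (hsrc : ∀ e : E, hd e ≠ s) (hts : t ≠ s) (f : E → ℕ)
    (hf : IsFlow tl hd s t f) (B : Finset E) (hB : NSeparates tl hd s t B)
    (hcard : B.card = flowValue tl hd s f) :
    ¬ RAvoid tl hd s B t ∧ ∀ v, FReach tl hd f s v → RAvoid tl hd s B v := by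
  classical
  have htT : ¬ RAvoid tl hd s B t := by
    rintro (h | ⟨p, hp, hlast, havoid⟩)
    · exact hts h
    · obtain ⟨b, hbB, hbp⟩ := hB p ⟨hp, hlast⟩
      exact havoid b hbp hbB
  have hbd : ∀ e : E, RAvoid tl hd s B (tl e) → ¬ RAvoid tl hd s B (hd e) → e ∈ B := by
    intro e h1 h2
    by_contra he
    exact h2 (RAvoid.extend tl hd s h1 he)
  have hcount := cut_count tl hd s t hsrc f hf (RAvoid tl hd s B) (Or.inl rfl) htT
  set X := ∑ e : E, if RAvoid tl hd s B (tl e) ∧ ¬ RAvoid tl hd s B (hd e) then f e else 0 with hX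
  set Y := ∑ e : E, if RAvoid tl hd s B (hd e) ∧ ¬ RAvoid tl hd s B (tl e) then f e else 0 with hY
  set M := ∑ e : E, if RAvoid tl hd s B (tl e) ∧ ¬ RAvoid tl hd s B (hd e) then 1 else 0 with hM
  have hXM : X ≤ M := by
    refine Finset.sum_le_sum (fun e _ => ?_)
    split_ifs
    · exact hf.1 e
    · exact le_refl 0
  have hMB : M ≤ B.card := by
    have : M ≤ ∑ e : E, if e ∈ B then 1 else 0 := by
      refine Finset.sum_le_sum (fun e _ => ?_)
      split_ifs with h1 h2
      · exact le_refl 1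
      · exact absurd (hbd e h1.1 h1.2) h2
      · exact Nat.zero_le 1
      · exact le_refl 0
    have hBc : (∑ e : E, if e ∈ B then (1 : ℕ) else 0) = B.card := by
      rw [Finset.sum_ite_mem, Finset.univ_inter, Finset.sum_const, smul_eq_mul, mul_one]
    omega
  have hXfv : X = flowValue tl hd s f ∧ Y = 0 := by
    constructor <;> omega
  have hXMeq : X = M := by omega
  have hsat : ∀ e : E, RAvoid tl hd s B (tl e) → ¬ RAvoid tl hd s B (hd e) → f e = 1 := by
    intro e h1 h2
    have := (Finset.sum_eq_sum_iff_of_le (s := (Finset.univ : Finset E))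
      (f := fun e => if RAvoid tl hd s B (tl e) ∧ ¬ RAvoid tl hd s B (hd e) then f e else 0)
      (g := fun e => if RAvoid tl hd s B (tl e) ∧ ¬ RAvoid tl hd s B (hd e) then 1 else 0)
      (fun e _ => by split_ifs; exacts [hf.1 e, le_refl 0])).mp hXMeq e (Finset.mem_univ e)
    simpa [h1, h2] using this
  have hemp : ∀ e : E, RAvoid tl hd s B (hd e) → ¬ RAvoid tl hd s B (tl e) → f e = 0 := by
    intro e h1 h2
    have := (Finset.sum_eq_zero_iff.mp hXfv.2) e (Finset.mem_univ e)
    simpa [h1, h2] using this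
  refine ⟨htT, fun v hv => ?_⟩
  induction hv with
  | refl => exact Or.inl rfl
  | forward e h h0 ih =>
    by_cases hT : RAvoid tl hd s B (hd e)
    · exact hT
    · exact absurd h0 (by rw [hsat e ih hT]; exact one_ne_zero)
  | backward e h h1 ih =>
    by_cases hT : RAvoid tl hd s B (tl e)
    · exact hT
    · exact absurd h1 (by rw [hemp e ih hT]; exact Nat.zero_ne_one)

end Aux

/-- given a maximum unit-capacity flow `f` from `s` to `t`, the set
of edges whose tail is `f`-reachable from `s` but whose head is not, is the
primary minimum cut between `s` and `t`. -/
theorem reachability_cut_is_primary {V E : Type*} [Fintype E] [DecidableEq V]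
    (tl hd : E → V) (s t : V)
    (hacy : Acyclic tl hd) (hsrc : ∀ e : E, hd e ≠ s) (hts : t ≠ s)
    (f : E → ℕ) (hf : IsFlow tl hd s t f)
    (hmax : flowValue tl hd s f = nmincut tl hd s t)
    (CUT : Finset E)
    (hCUT : ∀ e : E, e ∈ CUT ↔ (FReach tl hd f s (tl e) ∧ ¬ FReach tl hd f s (hd e))) :
    IsPrimaryNodeMinCut tl hd s t CUT := by
  classical
  -- existence of a minimum node cut
  have hne : {n | ∃ B : Finset E, NSeparates tl hd s t B ∧ B.card = n}.Nonempty := by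
    refine ⟨Finset.univ.card, Finset.univ, fun p hp => ?_, rfl⟩
    obtain ⟨⟨hpne, -, -⟩, -⟩ := hp
    cases p with
    | nil => exact absurd rfl hpne
    | cons a q => exact ⟨a, Finset.mem_univ a, List.mem_cons_self⟩
  obtain ⟨B0, hB0sep, hB0card⟩ := Nat.sInf_mem hne
  have hB0card2 : B0.card = nmincut tl hd s t := hB0card
  have hB0card' : B0.card = flowValue tl hd s f := by rw [hB0card2, ← hmax]
  obtain ⟨htT0, hsub0⟩ := core_lemma tl hd s t hsrc hts f hf B0 hB0sep hB0card'
  -- t is not residually reachable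
  have htS : ¬ FReach tl hd f s t := fun h => htT0 (hsub0 t h)
  -- every CUT edge is saturated; every reverse edge across S is empty
  have hCUTsat : ∀ e : E, FReach tl hd f s (tl e) → ¬ FReach tl hd f s (hd e) → f e = 1 := by
    intro e h1 h2
    have hle := hf.1 e
    rcases Nat.lt_or_ge (f e) 1 with h | h
    · exact absurd (FReach.forward e h1 (Nat.lt_one_iff.mp h)) h2
    · omega
  have hrev : ∀ e : E, FReach tl hd f s (hd e) → ¬ FReach tl hd f s (tl e) → f e = 0 := by
    intro e h1 h2
    have hle := hf.1 e
    rcases Nat.eq_or_lt_of_le hle with h | h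
    · exact absurd (FReach.backward e h1 h) h2
    · omega
  -- counting with S = FReach
  have hc := cut_count tl hd s t hsrc f hf (FReach tl hd f s) FReach.refl htS
  have hXcard : (∑ e : E, if FReach tl hd f s (tl e) ∧ ¬ FReach tl hd f s (hd e)
      then f e else 0) = CUT.card := by
    have : (∑ e : E, if FReach tl hd f s (tl e) ∧ ¬ FReach tl hd f s (hd e) then f e else 0)
        = ∑ e : E, if e ∈ CUT then 1 else 0 := by
      refine Finset.sum_congr rfl (fun e _ => ?_)
      by_cases h : e ∈ CUT
      · have hcond := (hCUT e).mp h
        simp [h, hcond, hCUTsat e hcond.1 hcond.2]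
      · have hcond : ¬ (FReach tl hd f s (tl e) ∧ ¬ FReach tl hd f s (hd e)) :=
          fun hc' => h ((hCUT e).mpr hc')
        simp [h, hcond]
    rw [this, Finset.sum_ite_mem, Finset.univ_inter, Finset.sum_const, smul_eq_mul, mul_one]
  have hY0 : (∑ e : E, if FReach tl hd f s (hd e) ∧ ¬ FReach tl hd f s (tl e)
      then f e else 0) = 0 := by
    refine Finset.sum_eq_zero (fun e _ => ?_)
    by_cases h : FReach tl hd f s (hd e) ∧ ¬ FReach tl hd f s (tl e)
    · simp [h, hrev e h.1 h.2]
    · simp [h]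
  have hcardCUT : CUT.card = nmincut tl hd s t := by
    rw [← hXcard] at *
    rw [hc, hY0, ← hmax]
    omega
  -- CUT separates s and t
  have hstep : ∀ p : List E, (∀ b ∈ CUT, b ∉ p) →
      ∀ e ∈ p, FReach tl hd f s (tl e) → FReach tl hd f s (hd e) := by
    intro p hav e he h1
    by_contra h2
    exact hav e ((hCUT e).mpr ⟨h1, h2⟩) he
  have hNsep : NSeparates tl hd s t CUT := by
    intro p hp
    by_contra hno
    push_neg at hno
    obtain ⟨⟨hpne, hpch, hphead⟩, hplast⟩ := hp
    have hheads := chain_heads tl hd (FReach tl hd f s) p hpch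
      (hstep p hno) s hphead FReach.refl
    obtain ⟨e, he⟩ : ∃ e, p.getLast? = some e := by
      cases hq : p.getLast? with
      | none => exact absurd (List.getLast?_eq_none_iff.mp hq) hpne
      | some e => exact ⟨e, rfl⟩
    have : FReach tl hd f s t := by
      rw [← hplast e (by rw [he]; rfl)]
      exact hheads e (List.mem_of_mem_getLast? he)
    exact htS this
  refine ⟨⟨hNsep, hcardCUT⟩, ?_⟩
  -- primary property
  intro C' hC' p hp hlastA
  obtain ⟨e, helast, heC'⟩ := hlastA
  by_contra hno
  push_neg at hno
  obtain ⟨hpne, hpch, hphead⟩ := hp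
  have hheads := chain_heads tl hd (FReach tl hd f s) p hpch (hstep p hno) s hphead FReach.refl
  have heS : FReach tl hd f s (hd e) := hheads e (List.mem_of_mem_getLast? helast)
  have hC'card2 : C'.card = nmincut tl hd s t := hC'.2
  have hC'card : C'.card = flowValue tl hd s f := by rw [hC'card2, ← hmax]
  obtain ⟨htT, hsub⟩ := core_lemma tl hd s t hsrc hts f hf C' hC'.1 hC'card
  have heT : RAvoid tl hd s C' (hd e) := hsub _ heS
  rcases heT with heq | ⟨q, ⟨hqne, hqch, hqhead⟩, hqlast, hqavoid⟩
  · exact hsrc e heq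
  -- e is essential for C': there is an s-t path whose only C'-edge is e
  have hnm1 : 1 ≤ nmincut tl hd s t := by
    rw [← hC'.2]; exact Finset.card_pos.mpr ⟨e, heC'⟩
  have hrex : ∃ r : List E, NPathFromTo tl hd s t r ∧ ∀ b ∈ C', b ∈ r → b = e := by
    by_contra hr
    push_neg at hr
    have hsep : NSeparates tl hd s t (C'.erase e) := by
      intro r hrp
      obtain ⟨b, hbC, hbr, hbe⟩ := hr r hrp
      exact ⟨b, Finset.mem_erase.mpr ⟨hbe, hbC⟩, hbr⟩
    have hle : nmincut tl hd s t ≤ (C'.erase e).card :=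
      Nat.sInf_le ⟨C'.erase e, hsep, rfl⟩
    rw [Finset.card_erase_of_mem heC', hC'.2] at hle
    omega
  obtain ⟨r, hrpath, hronly⟩ := hrex
  have her : e ∈ r := by
    obtain ⟨b, hbC, hbr⟩ := hC'.1 r hrpath
    exact (hronly b hbC hbr) ▸ hbr
  -- split r at the last occurrence of e
  obtain ⟨as, bs, habs, hnas⟩ := List.eq_append_cons_of_mem (List.mem_reverse.mpr her)
  have hr2 : r = bs.reverse ++ e :: as.reverse := by
    have h := congrArg List.reverse habs
    rw [List.reverse_reverse] at h
    rw [h, List.reverse_append, List.reverse_cons, List.append_assoc]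
    simp
  have hner2 : e ∉ as.reverse := fun h => hnas (List.mem_reverse.mp h)
  obtain ⟨⟨hrne, hrch, hrhead⟩, hrlast⟩ := hrpath
  have hrch' : EChain tl hd (bs.reverse ++ e :: as.reverse) := hr2 ▸ hrch
  have hch2 : EChain tl hd (e :: as.reverse) := (List.isChain_append.mp hrch').2.1
  have hlast2 : ∀ d ∈ (e :: as.reverse).getLast?, hd d = t := by
    intro d hdm
    apply hrlast
    rw [hr2, List.getLast?_append]
    cases hq : (e :: as.reverse).getLast? with
    | none => rw [hq] at hdm; exact absurd hdm (by simp)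
    | some d' =>
      rw [hq] at hdm
      simp at hdm
      subst hdm
      simp [hq]
  -- assemble the path q ++ r2 from s to t avoiding C'
  have hr2avoid : ∀ b ∈ as.reverse, b ∉ C' := by
    intro b hb hbC
    have hbr : b ∈ r := by rw [hr2]; exact List.mem_append_right _ (List.mem_cons_of_mem e hb)
    exact hner2 ((hronly b hbC hbr) ▸ hb)
  cases has : as.reverse with
  | nil =>
    have hte : hd e = t := by
      apply hlast2 e
      rw [has]
      rfl
    obtain ⟨b, hbC, hbq⟩ := hC'.1 q
      ⟨⟨hqne, hqch, hqhead⟩, fun d hdm => (hqlast d hdm).trans hte⟩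
    exact hqavoid b hbq hbC
  | cons a r2' =>
    have hch2' : EChain tl hd (e :: a :: r2') := has ▸ hch2
    have hlink := List.isChain_cons.mp hch2'
    have hwch : EChain tl hd (q ++ a :: r2') := by
      refine List.IsChain.append hqch hlink.2 (fun x hx y hy => ?_)
      simp at hy
      subst hy
      rw [hqlast x hx]
      exact hlink.1 a rfl
    have hwhead : ∀ d ∈ (q ++ a :: r2').head?, tl d = s := by
      have hh : (q ++ a :: r2').head? = q.head? := by
        cases q with
        | nil => exact absurd rfl hqne
        | cons c q' => rfl
      rw [hh]; exact hqhead
    have hwlast : ∀ d ∈ (q ++ a :: r2').getLast?, hd d = t := by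
      intro d hdm
      rw [List.getLast?_append] at hdm
      apply hlast2
      rw [has, List.getLast?_cons_cons]
      cases hq2 : (a :: r2').getLast? with
      | none => exact absurd (List.getLast?_eq_none_iff.mp hq2) (by simp)
      | some d' =>
        rw [hq2] at hdm
        simp at hdm
        subst hdm
        rfl
    obtain ⟨b, hbC, hbw⟩ := hC'.1 (q ++ a :: r2')
      ⟨⟨by simp [hqne], hwch, hwhead⟩, hwlast⟩
    rcases List.mem_append.mp hbw with hb | hb
    · exact hqavoid b hb hbC
    · exact hr2avoid b (has ▸ hb) hbC
end
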